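/- Let A ∈ ℂ^{n×n} be Hermitian, L ∈ ℂ^{n×n} with Re L negative semidefinite and ker(Re L) = ker L. Suppose for every λ ∈ ℂ one has ker(λI - A) ∩ ker L = {0}. Then for every eigenvalue λ of A and every matrix J_R ∈ ℂ^{n×α} whose columns form an orthonormal basis of ker(A - λI), the Hermitian matrix J_R* (Re L) J_R is negative definite. -/

import Mathlib

open scoped ComplexOrder Matrix

theorem shizuta_kawashima_implies_projected_dissipativity
    (n α : ℕ) (A L : Matrix (Fin n) (Fin n) ℂ) (hA : A.IsHermitian)
    (hReL : (-((1/2 : ℂ) • (L + Lᴴ))).PosSemidef)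
    (hker : ∀ x : Fin n → ℂ, ((1/2 : ℂ) • (L + Lᴴ)).mulVec x = 0 ↔ L.mulVec x = 0)
    (hK : ∀ (μ : ℂ) (x : Fin n → ℂ), A.mulVec x = μ • x → L.mulVec x = 0 → x = 0)
    (lam : ℂ) (hlam : ∃ v : Fin n → ℂ, v ≠ 0 ∧ A.mulVec v = lam • v)
    (JR : Matrix (Fin n) (Fin α) ℂ)
    (hortho : JRᴴ * JR = 1)
    (hJR_eig : ∀ w : Fin α → ℂ, A.mulVec (JR.mulVec w) = lam • JR.mulVec w)
    (hJR_span : ∀ x : Fin n → ℂ, A.mulVec x = lam • x → ∃ w, x = JR.mulVec w) :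
    (-(JRᴴ * ((1/2 : ℂ) • (L + Lᴴ)) * JR)).PosDef := by
  set R : Matrix (Fin n) (Fin n) ℂ := (1/2 : ℂ) • (L + Lᴴ) with hR
  have hM : (JRᴴ * (-R) * JR).PosSemidef := hReL.conjTranspose_mul_mul_same JR
  have hEq : -(JRᴴ * R * JR) = JRᴴ * (-R) * JR := by
    rw [Matrix.mul_neg, Matrix.neg_mul]
  rw [hEq]
  refine Matrix.PosDef.of_dotProduct_mulVec_pos hM.1 fun w hw => ?_
  have hPS := hM.dotProduct_mulVec_nonneg w
  rcases lt_or_eq_of_le hPS with h | h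
  · exact h
  · exfalso
    -- rewrite the quadratic form in terms of y = JR *ᵥ w
    set y : Fin n → ℂ := JR.mulVec w with hy
    have hform : star w ⬝ᵥ (JRᴴ * (-R) * JR) *ᵥ w = star y ⬝ᵥ (-R) *ᵥ y := by
      rw [hy, ← Matrix.mulVec_mulVec, ← Matrix.mulVec_mulVec,
        Matrix.dotProduct_mulVec (star w), ← Matrix.star_mulVec
        ]
    have h0 : star y ⬝ᵥ (-R) *ᵥ y = 0 := by rw [← hform, ← h]
    have hRy : (-R).mulVec y = 0 := (hReL.dotProduct_mulVec_zero_iff y).mp h0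
    have hRy' : R.mulVec y = 0 := by
      have := congrArg Neg.neg hRy
      simpa [Matrix.neg_mulVec] using this
    have hLy : L.mulVec y = 0 := (hker y).mp hRy'
    have hy0 : y = 0 := hK lam y (hJR_eig w) hLy
    apply hw
    have : (JRᴴ * JR).mulVec w = JRᴴ.mulVec y := by
      rw [hy, Matrix.mulVec_mulVec]
    rw [hortho, Matrix.one_mulVec, hy0, Matrix.mulVec_zero] at this
    exact this
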